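/- Let I be a nonempty index type, b : I → ℝ bounded above, and w : I → ℝⁿ bounded. Define g : ℝⁿ → ℝ by g(λ) := sup_{i ∈ I} (b(i) + ⟨λ, w(i)⟩), which is finite for every λ. Then for Lebesgue-almost every λ ∈ ℝⁿ the following holds: for all i, j ∈ I, if b(i) + ⟨λ, w(i)⟩ = g(λ) and b(j) + ⟨λ, w(j)⟩ = g(λ), then w(i) = w(j). -/

import Mathlib

open MeasureTheory

/-- the pointwise supremum `g(λ) = ⨆ i, (b i + ⟨λ, w i⟩)` of a
family of affine functions with bounded data is such that, for Lebesgue-almost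
every `λ`, all indices attaining the supremum share the same slope `w i`. -/
theorem stmt5 {I : Type*} [Nonempty I] {n : ℕ}
    (b : I → ℝ) (hb : BddAbove (Set.range b))
    (w : I → (Fin n → ℝ)) (R : ℝ) (hw : ∀ i k, |w i k| ≤ R) :
    ∀ᵐ lam : (Fin n → ℝ) ∂volume, ∀ i j : I,
      b i + ∑ k, lam k * w i k = (⨆ i' : I, (b i' + ∑ k, lam k * w i' k)) →
      b j + ∑ k, lam k * w j k = (⨆ i' : I, (b i' + ∑ k, lam k * w i' k)) →
      w i = w j := by
  obtain rfl | hn := Nat.eq_zero_or_pos n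
  · filter_upwards with lam i j _ _
    funext k; exact Fin.elim0 k
  have hR : 0 ≤ R := le_trans (abs_nonneg _) (hw (Classical.arbitrary I) ⟨0, hn⟩)
  set f : I → (Fin n → ℝ) → ℝ := fun i lam => b i + ∑ k, lam k * w i k with hf
  set g : (Fin n → ℝ) → ℝ := fun lam => ⨆ i' : I, f i' lam with hg
  obtain ⟨B, hB⟩ := hb
  -- boundedness of the family at each point
  have hbdd : ∀ lam : Fin n → ℝ, BddAbove (Set.range (fun i => f i lam)) := by
    intro lam
    refine ⟨B + ∑ k, |lam k| * R, ?_⟩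
    rintro x ⟨i, rfl⟩
    have h1 : b i ≤ B := hB ⟨i, rfl⟩
    have h2 : ∑ k, lam k * w i k ≤ ∑ k, |lam k| * R := by
      apply Finset.sum_le_sum
      intro k _
      calc lam k * w i k ≤ |lam k * w i k| := le_abs_self _
        _ = |lam k| * |w i k| := abs_mul _ _
        _ ≤ |lam k| * R := by
            exact mul_le_mul_of_nonneg_left (hw i k) (abs_nonneg _)
    exact add_le_add h1 h2
  -- key sub-lemma: difference bound
  have hdiffle : ∀ x y : Fin n → ℝ, g x ≤ g y + (n * R) * dist x y := by
    intro x y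
    apply ciSup_le
    intro i
    have hle : f i x ≤ f i y + (n * R) * dist x y := by
      have : f i x - f i y = ∑ k, (x k - y k) * w i k := by
        simp only [hf, sub_mul, Finset.sum_sub_distrib]
        ring
      have hb2 : ∑ k, (x k - y k) * w i k ≤ (n * R) * dist x y := by
        calc ∑ k, (x k - y k) * w i k ≤ ∑ k, dist x y * R := by
              apply Finset.sum_le_sum
              intro k _
              calc (x k - y k) * w i k ≤ |(x k - y k) * w i k| := le_abs_self _
                _ = |x k - y k| * |w i k| := abs_mul _ _
                _ ≤ dist x y * R := by
                    apply mul_le_mul _ (hw i k) (abs_nonneg _) dist_nonneg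
                    have := norm_le_pi_norm (x - y) k
                    simpa [Real.norm_eq_abs, dist_eq_norm] using this
          _ = (n * R) * dist x y := by
              simp [Finset.sum_const, Finset.card_univ]
              ring
      linarith
    exact hle.trans (by
      have : f i y ≤ g y := le_ciSup (hbdd y) i
      linarith)
  -- g is Lipschitz
  have hK : (0:ℝ) ≤ n * R := by positivity
  have hLip : LipschitzWith ⟨n * R, hK⟩ g := by
    refine LipschitzWith.of_dist_le_mul ?_
    intro x y
    rw [Real.dist_eq, abs_sub_le_iff]
    change _ ≤ (n * R) * dist x y ∧ _ ≤ (n * R) * dist x y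
    constructor
    · have := hdiffle x y; linarith
    · have := hdiffle y x; rw [dist_comm] at this; linarith
  -- the candidate derivative of each affine function
  set L : I → ((Fin n → ℝ) →L[ℝ] ℝ) :=
    fun i => ∑ k, (w i k) • ContinuousLinearMap.proj (R := ℝ) (φ := fun _ : Fin n => ℝ) k with hL
  have hfderiv : ∀ i lam, HasFDerivAt (f i) (L i) lam := by
    intro i lam
    have h1 : HasFDerivAt (fun x : Fin n → ℝ => ∑ k, x k * w i k) (L i) lam := by
      apply HasFDerivAt.fun_sum
      intro k _
      exact (hasFDerivAt_apply k lam).mul_const (w i k)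
    simpa [hf] using h1.const_add (b i)
  have hLval : ∀ i k, L i (Pi.single k 1) = w i k := by
    intro i k
    simp only [hL, ContinuousLinearMap.sum_apply, ContinuousLinearMap.smul_apply,
      ContinuousLinearMap.proj_apply, Pi.single_apply, smul_eq_mul]
    simp [Finset.sum_ite_eq']
  -- main argument
  filter_upwards [hLip.ae_differentiableAt (μ := volume)] with lam hdiff
  intro i j hi hj
  have key : ∀ i' : I, f i' lam = g lam → fderiv ℝ g lam = L i' := by
    intro i' hi'
    set φ := fun x : Fin n → ℝ => g x - f i' x with hφ
    have hmin : IsLocalMin φ lam := by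
      apply Filter.Eventually.of_forall
      intro x
      have h1 : f i' x ≤ g x := le_ciSup (hbdd x) i'
      simp only [hφ]
      rw [hi']
      linarith
    have hdφ : DifferentiableAt ℝ φ lam := hdiff.sub (hfderiv i' lam).differentiableAt
    have h0 : fderiv ℝ φ lam = 0 := hmin.fderiv_eq_zero
    have h1 : fderiv ℝ φ lam = fderiv ℝ g lam - L i' := by
      rw [hφ]
      rw [fderiv_fun_sub hdiff (hfderiv i' lam).differentiableAt, (hfderiv i' lam).fderiv]
    rw [h1] at h0
    exact sub_eq_zero.mp h0
  have hLi : fderiv ℝ g lam = L i := key i hi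
  have hLj : fderiv ℝ g lam = L j := key j hj
  have hLL : L i = L j := hLi ▸ hLj
  funext k
  rw [← hLval i k, ← hLval j k, hLL]
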